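/- Let n be a positive integer, a = (a_1,...,a_n) and b = (b_1,...,b_n) be n-tuples of complex numbers with b_k ≠ 0 for all k, and p = (p_1,...,p_n) nonnegative real weights with ∑_{i=1}^n p_i = 1. Let γ, Γ ∈ ℂ satisfy Re(Γ · conj(γ)) < 0 and Γ ≠ γ, and suppose |a_k/conj(b_k) - (γ + Γ)/2| ≤ (1/2)|Γ - γ| for every k ∈ {1,...,n}. Then ∑_{k=1}^n p_k |a_k|^2 ≤ - Re(Γ conj(γ)) ∑_{k=1}^n p_k |b_k|^2 + Re[ (conj(Γ) + conj(γ)) ∑_{k=1}^n p_k a_k b_k ] ≤ - Re(Γ conj(γ)) ∑_{k=1}^n p_k |b_k|^2 + |Γ + γ| · | ∑_{k=1}^n p_k a_k b_k |. -/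

import Mathlib

open Complex

theorem stmt_10 (n : ℕ) (hn : 0 < n) (a b : Fin n → ℂ) (p : Fin n → ℝ)
    (hb : ∀ k, b k ≠ 0) (hp : ∀ k, 0 ≤ p k) (hp1 : ∑ i, p i = 1)
    (γ Γ : ℂ) (hΓγ : (Γ * (starRingEnd ℂ) γ).re < 0) (hne : Γ ≠ γ)
    (h : ∀ k, ‖a k / (starRingEnd ℂ) (b k) - (γ + Γ) / 2‖
        ≤ (1 / 2) * ‖Γ - γ‖) :
    ∑ k, p k * ‖a k‖ ^ 2
      ≤ -(Γ * (starRingEnd ℂ) γ).re * ∑ k, p k * ‖b k‖ ^ 2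
        + (((starRingEnd ℂ) Γ + (starRingEnd ℂ) γ) * ∑ k, (p k : ℂ) * a k * b k).re
    ∧ -(Γ * (starRingEnd ℂ) γ).re * ∑ k, p k * ‖b k‖ ^ 2
        + (((starRingEnd ℂ) Γ + (starRingEnd ℂ) γ) * ∑ k, (p k : ℂ) * a k * b k).re
      ≤ -(Γ * (starRingEnd ℂ) γ).re * ∑ k, p k * ‖b k‖ ^ 2
        + ‖Γ + γ‖ * ‖∑ k, (p k : ℂ) * a k * b k‖ := by
  constructor
  · -- per-k inequality
    have key : ∀ k, p k * ‖a k‖ ^ 2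
        ≤ -(Γ * (starRingEnd ℂ) γ).re * (p k * ‖b k‖ ^ 2)
          + (((starRingEnd ℂ) Γ + (starRingEnd ℂ) γ) * ((p k : ℂ) * a k * b k)).re := by
      intro k
      set z := a k / (starRingEnd ℂ) (b k) with hz
      have hbk : (starRingEnd ℂ) (b k) ≠ 0 := by
        simpa using hb k
      have haz : a k = z * (starRingEnd ℂ) (b k) := by
        rw [hz, div_mul_cancel₀ _ hbk]
      have hsq : Complex.normSq (z - (γ + Γ) / 2) ≤ (‖Γ - γ‖) ^ 2 / 4 := by
        have h1 := h k
        have h2 : ‖z - (γ + Γ) / 2‖ ^ 2 ≤ ((1/2) * ‖Γ - γ‖) ^ 2 := by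
          apply sq_le_sq' _ h1
          nlinarith [norm_nonneg (z - (γ + Γ)/2), norm_nonneg (Γ - γ)]
        rw [Complex.sq_norm] at h2
        nlinarith [h2]
      have hzineq : ‖z‖ ^ 2 ≤ -(Γ * (starRingEnd ℂ) γ).re
          + (((starRingEnd ℂ) Γ + (starRingEnd ℂ) γ) * z).re := by
        rw [Complex.sq_norm (Γ - γ)] at hsq
        rw [Complex.sq_norm]
        simp only [Complex.normSq_apply, Complex.sub_re, Complex.sub_im, Complex.div_re,
          Complex.div_im, Complex.add_re, Complex.add_im, Complex.mul_re, Complex.mul_im,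
          Complex.conj_re, Complex.conj_im, Complex.ofReal_re, Complex.ofReal_im,
          Complex.re_ofNat, Complex.im_ofNat] at hsq ⊢
        nlinarith [hsq]
      -- multiply by p k * |b k|^2
      have habs : ‖a k‖ ^ 2 = ‖z‖ ^ 2 * ‖b k‖ ^ 2 := by
        rw [haz, norm_mul, Complex.norm_conj]; ring
      have hab : (p k : ℂ) * a k * b k = (p k : ℂ) * ((‖b k‖ ^ 2 : ℝ) : ℂ) * z := by
        rw [haz]
        rw [Complex.sq_norm]
        rw [Complex.normSq_eq_conj_mul_self]
        push_cast
        ring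
      have hre : (((starRingEnd ℂ) Γ + (starRingEnd ℂ) γ) * ((p k : ℂ) * a k * b k)).re
          = p k * ‖b k‖ ^ 2 * (((starRingEnd ℂ) Γ + (starRingEnd ℂ) γ) * z).re := by
        rw [hab]
        have : ((starRingEnd ℂ) Γ + (starRingEnd ℂ) γ) * ((p k : ℂ) * ((‖b k‖ ^ 2 : ℝ) : ℂ) * z)
            = ((p k * ‖b k‖ ^ 2 : ℝ) : ℂ) * (((starRingEnd ℂ) Γ + (starRingEnd ℂ) γ) * z) := by
          push_cast; ring
        rw [this, Complex.re_ofReal_mul]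
      rw [habs, hre]
      have hpb : 0 ≤ p k * ‖b k‖ ^ 2 := mul_nonneg (hp k) (sq_nonneg _)
      nlinarith [mul_le_mul_of_nonneg_left hzineq hpb]
    calc ∑ k, p k * ‖a k‖ ^ 2
        ≤ ∑ k, (-(Γ * (starRingEnd ℂ) γ).re * (p k * ‖b k‖ ^ 2)
          + (((starRingEnd ℂ) Γ + (starRingEnd ℂ) γ) * ((p k : ℂ) * a k * b k)).re) :=
          Finset.sum_le_sum fun k _ => key k
      _ = -(Γ * (starRingEnd ℂ) γ).re * ∑ k, p k * ‖b k‖ ^ 2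
          + (((starRingEnd ℂ) Γ + (starRingEnd ℂ) γ) * ∑ k, (p k : ℂ) * a k * b k).re := by
          rw [Finset.sum_add_distrib]
          congr 1
          · rw [Finset.mul_sum]
          · rw [Finset.mul_sum, Complex.re_sum]
  · apply add_le_add_right
    calc (((starRingEnd ℂ) Γ + (starRingEnd ℂ) γ) * ∑ k, (p k : ℂ) * a k * b k).re
        ≤ ‖((starRingEnd ℂ) Γ + (starRingEnd ℂ) γ) * ∑ k, (p k : ℂ) * a k * b k‖ :=
          Complex.re_le_norm _
      _ = ‖Γ + γ‖ * ‖∑ k, (p k : ℂ) * a k * b k‖ := by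
          rw [norm_mul, ← map_add, Complex.norm_conj]
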